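/- arXiv:1605.01376 — 3 statements merged into one kernel-verified Lean document; each statement's English description precedes it below -/
import Mathlib

section
/- Let g be a finite-dimensional Lie algebra with structure constants C^λ_{μν}, and let x̂_ρ = x_τ φ^τ_ρ be the symmetric-ordering realization of the generators of U(g) inside the completed Weyl algebra Â_n, where φ = -C/(e^{-C}-1) with C^α_β = C^α_{βγ}∂^γ. Then for all k ≥ 0, ad^k(∂^ρ ⊗ x̂_ρ)(1 ⊗ x̂_μ) = ((-C)^k)^τ_μ ⊗ x̂_τ, computed in the completed tensor square of Â_n. -/
/-- with `D μ` playing the role of `∂^μ ⊗ 1` and `Xh μ` playing the role of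
`1 ⊗ x̂_μ` (so that all `D` commute with all `Xh`, the `D`'s commute among themselves and the
`Xh`'s satisfy the Lie algebra relations with structure constants `c`), and
`p = ∑_ρ D ρ * Xh ρ` playing the role of `∂^ρ ⊗ x̂_ρ`, one has for all `K ≥ 0`:
`ad^K(∂^ρ⊗x̂_ρ)(1⊗x̂_μ) = ((-C)^K)^τ_μ ⊗ x̂_τ`, where `C^α_β = C^α_{βγ} ∂^γ`. -/
theorem statement5 {k H : Type*} [Field k] [CharZero k] [Ring H] [Algebra k H] {n : ℕ}
    (c : Fin n → Fin n → Fin n → k)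
    (hanti : ∀ l a b : Fin n, c l a b = - c l b a)
    (D Xh : Fin n → H)
    (hDD : ∀ μ ν, Commute (D μ) (D ν))
    (hDX : ∀ μ ν, Commute (D μ) (Xh ν))
    (hXX : ∀ μ ν, Xh μ * Xh ν - Xh ν * Xh μ = ∑ l : Fin n, c l μ ν • Xh l)
    (p : H) (hp : p = ∑ ρ : Fin n, D ρ * Xh ρ)
    (Cop : Matrix (Fin n) (Fin n) H)
    (hCop : ∀ a b, Cop a b = ∑ g : Fin n, c a b g • D g)
    (K : ℕ) (μ : Fin n) :
    (fun z => p * z - z * p)^[K] (Xh μ) = ∑ τ : Fin n, ((-Cop) ^ K) τ μ * Xh τ := by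
  have hCD : ∀ a b g, Commute (Cop a b) (D g) := fun a b g => by
    rw [hCop]
    exact Commute.sum_left _ _ _ fun i _ => (hDD i g).smul_left _
  have hMD : ∀ K a b g, Commute (((-Cop) ^ K) a b) (D g) := by
    intro K
    induction K with
    | zero =>
      intro a b g
      rw [pow_zero, Matrix.one_apply]
      split_ifs
      · exact Commute.one_left _
      · exact Commute.zero_left _
    | succ K ih =>
      intro a b g
      rw [pow_succ', Matrix.mul_apply]
      refine Commute.sum_left _ _ _ fun i _ => Commute.mul_left ?_ (ih i b g)
      have h := (hCD a i g).neg_left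
      simpa using h
  have hMX : ∀ K a b g, Commute (((-Cop) ^ K) a b) (Xh g) := by
    intro K
    induction K with
    | zero =>
      intro a b g
      rw [pow_zero, Matrix.one_apply]
      split_ifs
      · exact Commute.one_left _
      · exact Commute.zero_left _
    | succ K ih =>
      intro a b g
      rw [pow_succ', Matrix.mul_apply]
      refine Commute.sum_left _ _ _ fun i _ => Commute.mul_left ?_ (ih i b g)
      have : Commute (Cop a i) (Xh g) := by
        rw [hCop]
        exact Commute.sum_left _ _ _ fun j _ => ((hDX j g).smul_left _)
      simpa using this.neg_left
  have hMp : ∀ K a b, Commute (((-Cop) ^ K) a b) p := by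
    intro K a b
    rw [hp]
    exact Commute.sum_right _ _ _ fun ρ _ => (hMD K a b ρ).mul_right (hMX K a b ρ)
  have hMC : ∀ K a b l t, Commute (((-Cop) ^ K) a b) ((-Cop) l t) := by
    intro K a b l t
    have : Commute (((-Cop) ^ K) a b) (Cop l t) := by
      rw [hCop]
      exact Commute.sum_right _ _ _ fun g _ => (hMD K a b g).smul_right _
    simpa using this.neg_right
  have adpX : ∀ τ, p * Xh τ - Xh τ * p = ∑ l : Fin n, (-Cop) l τ * Xh l := by
    intro τ
    rw [hp, Finset.sum_mul, Finset.mul_sum, ← Finset.sum_sub_distrib]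
    have h1 : ∀ ρ ∈ Finset.univ, D ρ * Xh ρ * Xh τ - Xh τ * (D ρ * Xh ρ)
        = ∑ l : Fin n, c l ρ τ • (D ρ * Xh l) := by
      intro ρ _
      have h2 : Xh τ * (D ρ * Xh ρ) = D ρ * (Xh τ * Xh ρ) := by
        rw [← mul_assoc, ← (hDX ρ τ).eq, mul_assoc]
      rw [h2, mul_assoc, ← mul_sub, hXX, Finset.mul_sum]
      exact Finset.sum_congr rfl fun l _ => (mul_smul_comm _ _ _)
    rw [Finset.sum_congr rfl h1, Finset.sum_comm]
    refine Finset.sum_congr rfl fun l _ => ?_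
    rw [Matrix.neg_apply, hCop, neg_mul, Finset.sum_mul, ← Finset.sum_neg_distrib]
    refine Finset.sum_congr rfl fun g _ => ?_
    rw [smul_mul_assoc, ← neg_smul, ← hanti l g τ]
  induction K with
  | zero =>
    simp [Matrix.one_apply, Finset.sum_ite_eq']
  | succ K ih =>
    rw [Function.iterate_succ_apply', ih]
    show p * _ - _ * p = _
    rw [Finset.mul_sum, Finset.sum_mul, ← Finset.sum_sub_distrib]
    have step : ∀ τ ∈ Finset.univ,
        p * (((-Cop) ^ K) τ μ * Xh τ) - ((-Cop) ^ K) τ μ * Xh τ * p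
        = ∑ l : Fin n, ((-Cop) l τ * ((-Cop) ^ K) τ μ) * Xh l := by
      intro τ _
      rw [← mul_assoc, ← (hMp K τ μ).eq, mul_assoc, mul_assoc, ← mul_sub, adpX,
        Finset.mul_sum]
      refine Finset.sum_congr rfl fun l _ => ?_
      rw [← mul_assoc, (hMC K τ μ l τ).eq, mul_assoc, ← mul_assoc]
    rw [Finset.sum_congr rfl step, Finset.sum_comm]
    refine Finset.sum_congr rfl fun l _ => ?_
    rw [← Finset.sum_mul, pow_succ', Matrix.mul_apply]
end

section
/- Let H be the completed Heisenberg double H_g = U(g) ♯_φ Ŝ(g*) with source map α : U(g) → H, α(u) = u♯1, and target map β : U(g)^op → H determined by β(x̂_μ) = ŷ_μ = x̂_λ ♯ O^λ_μ where O = e^C. Let I be the right ideal of H ⊗ H generated by β(u) ⊗ 1 - 1 ⊗ α(u) for all u ∈ U(g). Then I is equal to the right ideal generated by the n elements x̂_ρ ⊗ 1 - O^τ_ρ ⊗ x̂_τ, ρ = 1,...,n. -/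
open TensorProduct MulOpposite

/-- for the Heisenberg double `H` of `U(g)` with source `α` and target `β`
(an algebra antihomomorphism, encoded on `U^op`), with `β(x̂_μ) = ŷ_μ = Σ_σ α(x̂_σ)·(O^{-1})^σ_μ`
for an invertible matrix `O` (representing `e^C`), the right ideal of `H ⊗ H` generated by
`{β(u) ⊗ 1 - 1 ⊗ α(u) : u ∈ U(g)}` equals the right ideal generated by the `n` elements
`x̂_ρ ⊗ 1 - O^τ_ρ ⊗ x̂_τ`, `ρ = 1,…,n`. -/
theorem statement7 {k U H : Type*} [Field k] [Ring U] [Ring H]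
    [Algebra k U] [Algebra k H] {n : ℕ}
    (α : U →ₐ[k] H) (β : Uᵐᵒᵖ →ₐ[k] H)
    (hcomm : ∀ u v : U, Commute (α u) (β (op v)))
    (xh : Fin n → U)
    (hgen : Algebra.adjoin k (Set.range xh) = ⊤)
    (O Oinv : Fin n → Fin n → H)
    (hO1 : ∀ a b : Fin n, ∑ s : Fin n, O a s * Oinv s b = if a = b then 1 else 0)
    (hO2 : ∀ a b : Fin n, ∑ s : Fin n, Oinv a s * O s b = if a = b then 1 else 0)
    (hβ : ∀ μ : Fin n, β (op (xh μ)) = ∑ σ : Fin n, α (xh σ) * Oinv σ μ) :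
    Submodule.span (H ⊗[k] H)ᵐᵒᵖ
        {z : H ⊗[k] H | ∃ u : U, z = β (op u) ⊗ₜ[k] (1 : H) - (1 : H) ⊗ₜ[k] α u}
      = Submodule.span (H ⊗[k] H)ᵐᵒᵖ
        (Set.range fun ρ : Fin n =>
          α (xh ρ) ⊗ₜ[k] (1 : H) - ∑ τ : Fin n, O τ ρ ⊗ₜ[k] α (xh τ)) := by
  set J := Submodule.span (H ⊗[k] H)ᵐᵒᵖ
      (Set.range fun ρ : Fin n =>
        α (xh ρ) ⊗ₜ[k] (1 : H) - ∑ τ : Fin n, O τ ρ ⊗ₜ[k] α (xh τ)) with hJ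
  set I := Submodule.span (H ⊗[k] H)ᵐᵒᵖ
      {z : H ⊗[k] H | ∃ u : U, z = β (op u) ⊗ₜ[k] (1 : H) - (1 : H) ⊗ₜ[k] α u} with hI
  -- generators of J lie in J by definition
  have hgenJ : ∀ ρ : Fin n,
      α (xh ρ) ⊗ₜ[k] (1 : H) - ∑ τ : Fin n, O τ ρ ⊗ₜ[k] α (xh τ) ∈ J :=
    fun ρ => Submodule.subset_span ⟨ρ, rfl⟩
  have hgenI : ∀ u : U, β (op u) ⊗ₜ[k] (1 : H) - (1 : H) ⊗ₜ[k] α u ∈ I :=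
    fun u => Submodule.subset_span ⟨u, rfl⟩
  -- key identity 1 : β(x̂_μ)⊗1 - 1⊗α(x̂_μ) ∈ J
  have key1 : ∀ μ : Fin n,
      β (op (xh μ)) ⊗ₜ[k] (1 : H) - (1 : H) ⊗ₜ[k] α (xh μ) ∈ J := by
    intro μ
    have hid : β (op (xh μ)) ⊗ₜ[k] (1 : H) - (1 : H) ⊗ₜ[k] α (xh μ)
        = ∑ σ : Fin n, (op (Oinv σ μ ⊗ₜ[k] (1 : H))) •
            (α (xh σ) ⊗ₜ[k] (1 : H) - ∑ τ : Fin n, O τ σ ⊗ₜ[k] α (xh τ)) := by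
      simp only [op_smul_eq_mul, sub_mul, Finset.sum_mul,
        Algebra.TensorProduct.tmul_mul_tmul, mul_one, one_mul, Finset.sum_sub_distrib]
      congr 1
      · rw [hβ, sum_tmul]
      · rw [Finset.sum_comm]
        have : ∀ τ : Fin n,
            (∑ σ : Fin n, (O τ σ * Oinv σ μ) ⊗ₜ[k] α (xh τ))
              = (if τ = μ then (1:H) else 0) ⊗ₜ[k] α (xh τ) := by
          intro τ
          rw [← sum_tmul, hO1]
        rw [Finset.sum_congr rfl fun τ _ => this τ]
        simp [ite_tmul]
    rw [hid]
    exact Submodule.sum_mem _ fun σ _ => Submodule.smul_mem _ _ (hgenJ σ)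
  -- key identity 2 : generators of J lie in I
  have key2 : ∀ ρ : Fin n,
      α (xh ρ) ⊗ₜ[k] (1 : H) - ∑ τ : Fin n, O τ ρ ⊗ₜ[k] α (xh τ) ∈ I := by
    intro ρ
    have hid : α (xh ρ) ⊗ₜ[k] (1 : H) - ∑ τ : Fin n, O τ ρ ⊗ₜ[k] α (xh τ)
        = ∑ μ : Fin n, (op (O μ ρ ⊗ₜ[k] (1 : H))) •
            (β (op (xh μ)) ⊗ₜ[k] (1 : H) - (1 : H) ⊗ₜ[k] α (xh μ)) := by
      simp only [op_smul_eq_mul, sub_mul,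
        Algebra.TensorProduct.tmul_mul_tmul, mul_one, one_mul, Finset.sum_sub_distrib]
      congr 1
      have : ∀ μ : Fin n, (β (op (xh μ)) * O μ ρ) ⊗ₜ[k] (1 : H)
          = ∑ τ : Fin n, (α (xh τ) * (Oinv τ μ * O μ ρ)) ⊗ₜ[k] (1 : H) := by
        intro μ
        rw [hβ, Finset.sum_mul, sum_tmul]
        simp [mul_assoc]
      rw [Finset.sum_congr rfl fun μ _ => this μ, Finset.sum_comm]
      have : ∀ τ : Fin n, (∑ μ : Fin n, (α (xh τ) * (Oinv τ μ * O μ ρ)) ⊗ₜ[k] (1 : H))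
          = (α (xh τ) * if τ = ρ then 1 else 0) ⊗ₜ[k] (1 : H) := by
        intro τ
        rw [← sum_tmul, ← Finset.mul_sum, hO2]
      rw [Finset.sum_congr rfl fun τ _ => this τ]
      simp [mul_ite, ite_tmul]
    rw [hid]
    exact Submodule.sum_mem _ fun μ _ => Submodule.smul_mem _ _ (hgenI (xh μ))
  -- multiplicativity
  have keymul : ∀ u v : U,
      β (op u) ⊗ₜ[k] (1 : H) - (1 : H) ⊗ₜ[k] α u ∈ J →
      β (op v) ⊗ₜ[k] (1 : H) - (1 : H) ⊗ₜ[k] α v ∈ J →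
      β (op (u * v)) ⊗ₜ[k] (1 : H) - (1 : H) ⊗ₜ[k] α (u * v) ∈ J := by
    intro u v hu hv
    have hid : β (op (u * v)) ⊗ₜ[k] (1 : H) - (1 : H) ⊗ₜ[k] α (u * v)
        = (op (β (op u) ⊗ₜ[k] (1 : H))) • (β (op v) ⊗ₜ[k] (1 : H) - (1 : H) ⊗ₜ[k] α v)
          + (op ((1 : H) ⊗ₜ[k] α v)) • (β (op u) ⊗ₜ[k] (1 : H) - (1 : H) ⊗ₜ[k] α u) := by
      simp only [op_smul_eq_mul, sub_mul, Algebra.TensorProduct.tmul_mul_tmul,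
        mul_one, one_mul]
      have h1 : β (op (u * v)) = β (op v) * β (op u) := by
        rw [show op (u * v) = op v * op u from rfl, map_mul]
      have h2 : α (u * v) = α u * α v := map_mul α u v
      rw [h1, h2]
      abel
    rw [hid]
    exact Submodule.add_mem _ (Submodule.smul_mem _ _ hv) (Submodule.smul_mem _ _ hu)
  -- all of I's generators lie in J
  have keyI : ∀ u : U, β (op u) ⊗ₜ[k] (1 : H) - (1 : H) ⊗ₜ[k] α u ∈ J := by
    intro u
    have hu : u ∈ Algebra.adjoin k (Set.range xh) := hgen ▸ Algebra.mem_top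
    induction hu using Algebra.adjoin_induction with
    | mem x hx =>
      obtain ⟨μ, rfl⟩ := hx
      exact key1 μ
    | algebraMap r =>
      have h1 : β (op (algebraMap k U r)) = algebraMap k H r := by
        rw [show op (algebraMap k U r) = algebraMap k Uᵐᵒᵖ r from rfl,
          AlgHom.commutes]
      have h2 : α (algebraMap k U r) = algebraMap k H r := AlgHom.commutes α r
      rw [h1, h2, Algebra.algebraMap_eq_smul_one, smul_tmul, sub_self]
      exact Submodule.zero_mem _
    | add x y hx hy ihx ihy =>
      have : β (op (x + y)) ⊗ₜ[k] (1 : H) - (1 : H) ⊗ₜ[k] α (x + y)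
          = (β (op x) ⊗ₜ[k] (1 : H) - (1 : H) ⊗ₜ[k] α x)
            + (β (op y) ⊗ₜ[k] (1 : H) - (1 : H) ⊗ₜ[k] α y) := by
        rw [show op (x + y) = op x + op y from rfl, map_add, map_add,
          add_tmul, tmul_add]
        abel
      rw [this]
      exact Submodule.add_mem _ ihx ihy
    | mul x y hx hy ihx ihy => exact keymul x y ihx ihy
  apply le_antisymm
  · rw [hI, Submodule.span_le]
    rintro z ⟨u, rfl⟩
    exact keyI u
  · rw [hJ, Submodule.span_le]
    rintro z ⟨ρ, rfl⟩
    exact key2 ρ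
end

section
/- Let H be a left A-bialgebroid and F ∈ H ⊗_A H a counital 2-cocycle (Drinfeld twist), i.e., (Δ ⊗_A id)(F)·(F ⊗_A 1) = (id ⊗_A Δ)(F)·(1 ⊗_A F) and (ε ⊗ id)(F) = 1 = (id ⊗ ε)(F). Then the product a ⋆ b := ε(F^{(1)} α(a)) · ε(F^{(2)} α(b)) — written a ⋆ b = (F^{(1)} ▸ a)(F^{(2)} ▸ b) — is associative on A with the same unit 1_A. -/
open TensorProduct MulOpposite

/-- Xu's theorem, associativity of the twisted base product: let `H` be a left
`A`-bialgebroid (source `α`, target `β`, a lift `Δ` of the coproduct, counit `ε`, with the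
usual axioms holding on representatives modulo the kernels `I₂ ⊂ H⊗H`, `I₃ ⊂ (H⊗H)⊗H` of the
projections to the tensor products over `A`), and let `F ∈ H ⊗ H` represent a counital
2-cocycle: `(Δ⊗id)(F)·(F⊗1) ≡ (id⊗Δ)(F)·(1⊗F) mod I₃`, `(ε⊗id)(F) = 1 = (id⊗ε)(F)`.
Then `a ⋆ b := (F⁽¹⁾ ▸ a)(F⁽²⁾ ▸ b) = ε(F⁽¹⁾α(a))·ε(F⁽²⁾α(b))` is associative with unit `1`. -/
theorem statement12 {k A H : Type*} [CommRing k] [Ring A] [Ring H]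
    [Algebra k A] [Algebra k H]
    (α : A →ₐ[k] H) (β : Aᵐᵒᵖ →ₐ[k] H)
    (hcomm : ∀ a b : A, Commute (α a) (β (op b)))
    (ε : H →ₗ[k] A)
    (hε1 : ε 1 = 1)
    (hεα : ∀ a : A, ε (α a) = a)
    (hbimod : ∀ (a b : A) (h : H), ε (α a * β (op b) * h) = a * ε h * b)
    (hchar : ∀ g h : H, ε (g * α (ε h)) = ε (g * h))
    -- a chosen lift `Δ : H → H ⊗ H` of the coproduct
    (Δ : H →ₗ[k] H ⊗[k] H)
    -- `(ε ⊗ id)` and `(id ⊗ ε)` composed with multiplication, characterized on pure tensors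
    (E1 : H ⊗[k] H →ₗ[k] H) (hE1 : ∀ g g' : H, E1 (g ⊗ₜ[k] g') = α (ε g) * g')
    (E2 : H ⊗[k] H →ₗ[k] H) (hE2 : ∀ g g' : H, E2 (g ⊗ₜ[k] g') = β (op (ε g')) * g)
    -- counit axioms of the bialgebroid
    (hcount1 : ∀ h : H, E1 (Δ h) = h)
    (hcount2 : ∀ h : H, E2 (Δ h) = h)
    -- `Δ` is multiplicative and unital modulo `I₂`
    (hΔ1 : Δ 1 - (1 : H) ⊗ₜ[k] (1 : H) ∈ Submodule.span (H ⊗[k] H)ᵐᵒᵖ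
      {w : H ⊗[k] H | ∃ c : A, w = β (op c) ⊗ₜ[k] (1 : H) - (1 : H) ⊗ₜ[k] α c})
    (hΔmul : ∀ g h : H, Δ (g * h) - Δ g * Δ h ∈ Submodule.span (H ⊗[k] H)ᵐᵒᵖ
      {w : H ⊗[k] H | ∃ c : A, w = β (op c) ⊗ₜ[k] (1 : H) - (1 : H) ⊗ₜ[k] α c})
    -- the pairing `P a b (Σ g ⊗ g') = Σ (g ▸ a)(g' ▸ b)` from Lemma 2.2
    (P : A → A → (H ⊗[k] H →ₗ[k] A))
    (hP : ∀ (a b : A) (g g' : H), P a b (g ⊗ₜ[k] g') = ε (g * α a) * ε (g' * α b))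
    -- compatibility of the action with the coproduct (bialgebroid axiom (i))
    (hact : ∀ (h : H) (w : H ⊗[k] H) (a b : A),
      ε (h * α (P a b w)) = P a b (Δ h * w))
    -- the twist
    (F : H ⊗[k] H)
    -- cocycle condition modulo `I₃`
    (hcoc : (LinearMap.rTensor H Δ) F * (F ⊗ₜ[k] (1 : H))
        - (TensorProduct.assoc k H H H).symm
            ((LinearMap.lTensor H Δ) F * ((1 : H) ⊗ₜ[k] F))
      ∈ Submodule.span ((H ⊗[k] H) ⊗[k] H)ᵐᵒᵖ
          ({w | ∃ c : A, w = (β (op c) ⊗ₜ[k] (1 : H)) ⊗ₜ[k] (1 : H)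
                - ((1 : H) ⊗ₜ[k] α c) ⊗ₜ[k] (1 : H)} ∪
           {w | ∃ c : A, w = ((1 : H) ⊗ₜ[k] β (op c)) ⊗ₜ[k] (1 : H)
                - ((1 : H) ⊗ₜ[k] (1 : H)) ⊗ₜ[k] α c}))
    -- counitality of the twist
    (hFcu1 : E1 F = 1) (hFcu2 : E2 F = 1) :
    (∀ a b c : A, P (P a b F) c F = P a (P b c F) F)
    ∧ (∀ a : A, P 1 a F = a) ∧ (∀ a : A, P a 1 F = a) := by

  classical
  -- basic consequences of the bimodule property of ε
  have e1 : ∀ (c' : A) (h : H), ε (β (op c') * h) = ε h * c' := by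
    intro c' h
    have := hbimod 1 c' h
    simpa using this
  have e2 : ∀ (c' : A) (h : H), ε (α c' * h) = c' * ε h := by
    intro c' h
    have := hbimod c' 1 h
    simpa using this
  refine ⟨?_, ?_, ?_⟩
  · intro a b c
    -- the trilinear pairing, in two associativity shapes
    let B : (H ⊗[k] H) →ₗ[k] H →ₗ[k] A :=
      ((LinearMap.mul k A).comp (P a b)).compl₂ (ε.comp (LinearMap.mulRight k (α c)))
    let Φ : (H ⊗[k] H) ⊗[k] H →ₗ[k] A := TensorProduct.lift B
    have hΦ : ∀ (w : H ⊗[k] H) (g : H), Φ (w ⊗ₜ[k] g) = P a b w * ε (g * α c) :=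
      fun w g => rfl
    let B' : H →ₗ[k] (H ⊗[k] H) →ₗ[k] A :=
      ((LinearMap.mul k A).comp (ε.comp (LinearMap.mulRight k (α a)))).compl₂ (P b c)
    let Ψ : H ⊗[k] (H ⊗[k] H) →ₗ[k] A := TensorProduct.lift B'
    have hΨ : ∀ (g : H) (w : H ⊗[k] H), Ψ (g ⊗ₜ[k] w) = ε (g * α a) * P b c w :=
      fun g w => rfl
    have hΦΨ : Φ = Ψ.comp (TensorProduct.assoc k H H H).toLinearMap := by
      apply TensorProduct.ext_threefold
      intro g g' g''
      simp [hΦ, hΨ, hP, mul_assoc]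
    -- the "right ideal annihilated by Φ" submodule
    let K : Submodule ((H ⊗[k] H) ⊗[k] H)ᵐᵒᵖ ((H ⊗[k] H) ⊗[k] H) :=
      { carrier := {w | ∀ z, Φ (w * z) = 0}
        add_mem' := fun hx hy z => by
          rw [add_mul, map_add, hx z, hy z, add_zero]
        zero_mem' := fun z => by rw [zero_mul, map_zero]
        smul_mem' := fun m w hw z => by
          rw [← MulOpposite.op_unop m, op_smul_eq_mul, mul_assoc]
          exact hw _ }
    have hgen1 : ∀ c' : A,
        ((β (op c') ⊗ₜ[k] (1 : H)) ⊗ₜ[k] (1 : H)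
          - ((1 : H) ⊗ₜ[k] α c') ⊗ₜ[k] (1 : H)) ∈ K := by
      intro c' z
      induction z using TensorProduct.induction_on with
      | zero => rw [mul_zero, map_zero]
      | add x y hx hy => rw [mul_add, map_add, hx, hy, add_zero]
      | tmul w g'' =>
        induction w using TensorProduct.induction_on with
        | zero => rw [zero_tmul, mul_zero, map_zero]
        | add x y hx hy => rw [add_tmul, mul_add, map_add, hx, hy, add_zero]
        | tmul g g' =>
          rw [sub_mul, map_sub, Algebra.TensorProduct.tmul_mul_tmul,
            Algebra.TensorProduct.tmul_mul_tmul,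
            Algebra.TensorProduct.tmul_mul_tmul,
            Algebra.TensorProduct.tmul_mul_tmul, one_mul, one_mul, one_mul,
            hΦ, hΦ, hP, hP, mul_assoc (β (op c')), e1, mul_assoc (α c'), e2]
          simp [mul_assoc]
    have hgen2 : ∀ c' : A,
        (((1 : H) ⊗ₜ[k] β (op c')) ⊗ₜ[k] (1 : H)
          - ((1 : H) ⊗ₜ[k] (1 : H)) ⊗ₜ[k] α c') ∈ K := by
      intro c' z
      induction z using TensorProduct.induction_on with
      | zero => rw [mul_zero, map_zero]
      | add x y hx hy => rw [mul_add, map_add, hx, hy, add_zero]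
      | tmul w g'' =>
        induction w using TensorProduct.induction_on with
        | zero => rw [zero_tmul, mul_zero, map_zero]
        | add x y hx hy => rw [add_tmul, mul_add, map_add, hx, hy, add_zero]
        | tmul g g' =>
          rw [sub_mul, map_sub, Algebra.TensorProduct.tmul_mul_tmul,
            Algebra.TensorProduct.tmul_mul_tmul,
            Algebra.TensorProduct.tmul_mul_tmul,
            Algebra.TensorProduct.tmul_mul_tmul, one_mul, one_mul, one_mul,
            hΦ, hΦ, hP, hP, mul_assoc (β (op c')), e1, mul_assoc (α c'), e2]
          simp [mul_assoc]
    have hspan :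
        Submodule.span ((H ⊗[k] H) ⊗[k] H)ᵐᵒᵖ
          ({w | ∃ c : A, w = (β (op c) ⊗ₜ[k] (1 : H)) ⊗ₜ[k] (1 : H)
                - ((1 : H) ⊗ₜ[k] α c) ⊗ₜ[k] (1 : H)} ∪
           {w | ∃ c : A, w = ((1 : H) ⊗ₜ[k] β (op c)) ⊗ₜ[k] (1 : H)
                - ((1 : H) ⊗ₜ[k] (1 : H)) ⊗ₜ[k] α c}) ≤ K := by
      rw [Submodule.span_le]
      rintro w (⟨c', rfl⟩ | ⟨c', rfl⟩)
      · exact hgen1 c'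
      · exact hgen2 c'
    have hΦ0 : Φ ((LinearMap.rTensor H Δ) F * (F ⊗ₜ[k] (1 : H))
        - (TensorProduct.assoc k H H H).symm
            ((LinearMap.lTensor H Δ) F * ((1 : H) ⊗ₜ[k] F))) = 0 := by
      have h := hspan hcoc 1
      rwa [mul_one] at h
    -- identify the two sides of the associativity with Φ/Ψ of the cocycle sides
    have hL : P (P a b F) c F
        = Φ ((LinearMap.rTensor H Δ) F * (F ⊗ₜ[k] (1 : H))) := by
      have hmaps : (P (P a b F) c)
          = Φ.comp ((LinearMap.mulRight k (F ⊗ₜ[k] (1 : H))).comp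
              (LinearMap.rTensor H Δ)) := by
        apply TensorProduct.ext'
        intro g g'
        simp only [LinearMap.comp_apply, LinearMap.rTensor_tmul,
          LinearMap.mulRight_apply, Algebra.TensorProduct.tmul_mul_tmul]
        rw [hP, hact g F a b, hΦ, mul_one]
      exact LinearMap.congr_fun hmaps F
    have hR : P a (P b c F) F
        = Ψ ((LinearMap.lTensor H Δ) F * ((1 : H) ⊗ₜ[k] F)) := by
      have hmaps : (P a (P b c F))
          = Ψ.comp ((LinearMap.mulRight k ((1 : H) ⊗ₜ[k] F)).comp
              (LinearMap.lTensor H Δ)) := by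
        apply TensorProduct.ext'
        intro g g'
        simp only [LinearMap.comp_apply, LinearMap.lTensor_tmul,
          LinearMap.mulRight_apply, Algebra.TensorProduct.tmul_mul_tmul]
        rw [hP, hact g' F b c, hΨ, mul_one]
      exact LinearMap.congr_fun hmaps F
    have hΨas : Φ ((TensorProduct.assoc k H H H).symm
          ((LinearMap.lTensor H Δ) F * ((1 : H) ⊗ₜ[k] F)))
        = Ψ ((LinearMap.lTensor H Δ) F * ((1 : H) ⊗ₜ[k] F)) := by
      rw [hΦΨ]
      simp
    rw [map_sub, hΨas, sub_eq_zero] at hΦ0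
    rw [hL, hR, hΦ0]
  · intro a
    have hmaps : (P 1 a) = (ε.comp (LinearMap.mulRight k (α a))).comp E1 := by
      apply TensorProduct.ext'
      intro g g'
      simp only [LinearMap.comp_apply, LinearMap.mulRight_apply, hE1, hP]
      rw [map_one, mul_one, mul_assoc, e2]
    rw [LinearMap.congr_fun hmaps F]
    simp only [LinearMap.comp_apply, LinearMap.mulRight_apply, hFcu1, one_mul, hεα]
  · intro a
    have hmaps : (P a 1) = (ε.comp (LinearMap.mulRight k (α a))).comp E2 := by
      apply TensorProduct.ext'
      intro g g'
      simp only [LinearMap.comp_apply, LinearMap.mulRight_apply, hE2, hP]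
      rw [map_one, mul_one, mul_assoc, e1]
    rw [LinearMap.congr_fun hmaps F]
    simp only [LinearMap.comp_apply, LinearMap.mulRight_apply, hFcu2, one_mul, hεα]
end
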